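/- arXiv:2410.16328 — 3 statements merged into one kernel-verified Lean document; each statement's English description precedes it below -/
import Mathlib

section
/- Let P : Cᵒᵖ → BoolAlg be a Boolean doctrine over a small category C with finite products. Let ī, j̄ ∈ ℕ, let Y₁, …, Y_ī, Z₁, …, Z_j̄ ∈ C, let αᵢ ∈ P(Yᵢ) for i = 1, …, ī and βⱼ ∈ P(Zⱼ) for j = 1, …, j̄. Then the following are equivalent: (1) for every propositional model (M, 𝔪) of P, if 𝔪_{Yᵢ}(αᵢ) = M(Yᵢ) for every i ∈ {1, …, ī}, then there is j ∈ {1, …, j̄} with 𝔪_{Zⱼ}(βⱼ) = M(Zⱼ); (2) there are n ∈ ℕ, indices l₁, …, l_n ∈ {1, …, ī} and morphisms gᵢ : ∏_{j=1}^{j̄} Zⱼ → Y_{lᵢ} (i = 1, …, n) such that, in P(∏_{j=1}^{j̄} Zⱼ), P(g₁)(α_{l₁}) ∧ … ∧ P(g_n)(α_{l_n}) ≤ P(pr₁)(β₁) ∨ … ∨ P(pr_{j̄})(β_{j̄}). -/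
open CategoryTheory CategoryTheory.Limits Opposite

universe w v u v₁ u₁ v₂ u₂ v₃ u₃

namespace BooleanDoctrine

/-- Elements of a Boolean algebra in the category `BoolAlg` can be acted on by morphisms. -/
instance (X Y : BoolAlg) : FunLike (X ⟶ Y) X Y :=
  { coe := fun f => f.hom
    coe_injective := fun _ _ h => BoolAlg.hom_ext (DFunLike.coe_injective h) }

/-- A filter of a Boolean algebra: contains `⊤`, closed under binary meets, upward closed. -/
def IsBAFilter {A : Type*} [BooleanAlgebra A] (F : Set A) : Prop :=
  (⊤ : A) ∈ F ∧ (∀ a b : A, a ∈ F → b ∈ F → a ⊓ b ∈ F) ∧ ∀ a b : A, a ∈ F → a ≤ b → b ∈ F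

/-- The fiber of a Boolean doctrine at an object of the base category. -/
abbrev fiber {C : Type u₁} [Category.{v₁} C] (P : Cᵒᵖ ⥤ BoolAlg.{w}) (X : C) : Type w :=
  P.obj (op X)

/-- A universal filter for a Boolean doctrine `P : Cᵒᵖ ⥤ BoolAlg`. -/
def IsUniversalFilter {C : Type u₁} [Category.{v₁} C] [HasFiniteProducts C]
    (P : Cᵒᵖ ⥤ BoolAlg.{w}) (F : ∀ X : C, Set (P.obj (op X))) : Prop :=
  (∀ (X Y : C) (f : X ⟶ Y) (α : P.obj (op Y)), α ∈ F Y → P.map f.op α ∈ F X) ∧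
    ∀ X : C, IsBAFilter (F X)

/-- A universal ideal for a Boolean doctrine `P : Cᵒᵖ ⥤ BoolAlg`. -/
def IsUniversalIdeal {C : Type u₁} [Category.{v₁} C] [HasFiniteProducts C]
    (P : Cᵒᵖ ⥤ BoolAlg.{w}) (I : ∀ X : C, Set (P.obj (op X))) : Prop :=
  (∀ (X Y : C) (m : ℕ) (f : Fin m → (X ⟶ Y)) (α : P.obj (op Y)),
      (Finset.univ.inf fun j => P.map (f j).op α) ∈ I X → α ∈ I Y) ∧
    (∀ (X : C) (a b : P.obj (op X)), a ≤ b → b ∈ I X → a ∈ I X) ∧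
    (∀ (X₁ X₂ : C) (α₁ : P.obj (op X₁)) (α₂ : P.obj (op X₂)), α₁ ∈ I X₁ → α₂ ∈ I X₂ →
      P.map (prod.fst : X₁ ⨯ X₂ ⟶ X₁).op α₁ ⊔ P.map (prod.snd : X₁ ⨯ X₂ ⟶ X₂).op α₂ ∈
        I (X₁ ⨯ X₂)) ∧
    (⊥ : P.obj (op (⊤_ C))) ∈ I (⊤_ C)

/-- A universal ultrafilter for a Boolean doctrine `P : Cᵒᵖ ⥤ BoolAlg`. -/
def IsUniversalUltrafilter {C : Type u₁} [Category.{v₁} C] [HasFiniteProducts C]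
    (P : Cᵒᵖ ⥤ BoolAlg.{w}) (F : ∀ X : C, Set (P.obj (op X))) : Prop :=
  (∀ (X Y : C) (f : X ⟶ Y) (α : P.obj (op Y)), α ∈ F Y → P.map f.op α ∈ F X) ∧
    (∀ X : C, IsBAFilter (F X)) ∧
    (∀ (X₁ X₂ : C) (α₁ : P.obj (op X₁)) (α₂ : P.obj (op X₂)),
      P.map (prod.fst : X₁ ⨯ X₂ ⟶ X₁).op α₁ ⊔ P.map (prod.snd : X₁ ⨯ X₂ ⟶ X₂).op α₂ ∈
          F (X₁ ⨯ X₂) →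
        α₁ ∈ F X₁ ∨ α₂ ∈ F X₂) ∧
    (⊥ : P.obj (op (⊤_ C))) ∉ F (⊤_ C)

/-- Richness of a Boolean doctrine with respect to a family of subsets of the fibers. -/
def IsRich {C : Type u₁} [Category.{v₁} C] [HasFiniteProducts C]
    (P : Cᵒᵖ ⥤ BoolAlg.{w}) (F : ∀ X : C, Set (P.obj (op X))) : Prop :=
  ∀ (X : C) (α : P.obj (op X)), α ∉ F X → ∃ c : (⊤_ C) ⟶ X, P.map c.op α ∉ F (⊤_ C)

/-- The failure of the "universal closure" of `a` witnessed by a constant `c : ⊤ ⟶ X`. -/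
def IsRichAt {C : Type u₁} [Category.{v₁} C] [HasFiniteProducts C]
    (P : Cᵒᵖ ⥤ BoolAlg.{w}) (F : ∀ X : C, Set (P.obj (op X)))
    (X : C) (a : P.obj (op X)) : Prop :=
  ∃ c : (⊤_ C) ⟶ X, P.map c.op a ∉ F (⊤_ C)

/-- The universal filter generated by a family of subsets of the fibers: the intersection of
all universal filters containing the family componentwise. -/
def genUnivFilter {C : Type u₁} [Category.{v₁} C] [HasFiniteProducts C]
    (P : Cᵒᵖ ⥤ BoolAlg.{w}) (A : ∀ X : C, Set (P.obj (op X))) :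
    ∀ X : C, Set (P.obj (op X)) := fun X =>
  {φ | ∀ G : ∀ X' : C, Set (P.obj (op X')),
    IsUniversalFilter P G → (∀ X', A X' ⊆ G X') → φ ∈ G X}

/-- The universal ideal generated by a family of subsets of the fibers: the intersection of
all universal ideals containing the family componentwise. -/
def genUnivIdeal {C : Type u₁} [Category.{v₁} C] [HasFiniteProducts C]
    (P : Cᵒᵖ ⥤ BoolAlg.{w}) (A : ∀ X : C, Set (P.obj (op X))) :
    ∀ X : C, Set (P.obj (op X)) := fun X =>
  {φ | ∀ J : ∀ X' : C, Set (P.obj (op X')),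
    IsUniversalIdeal P J → (∀ X', A X' ⊆ J X') → φ ∈ J X}

/-- The family of subsets of the fibers placing the element `α i` in the component `Y i`. -/
def familyOfPoints {C : Type u₁} [Category.{v₁} C] (P : Cᵒᵖ ⥤ BoolAlg.{w}) {ι : Type u₃}
    (Y : ι → C) (α : ∀ i, P.obj (op (Y i))) : ∀ X : C, Set (P.obj (op X)) := fun X =>
  {a | ∃ (i : ι) (h : Y i = X), a = P.map (eqToHom h.symm).op (α i)}

/-- The subsets doctrine, sending a set to its powerset Boolean algebra and a function to
its preimage map. -/
def subsetsDoctrine : (Type v)ᵒᵖ ⥤ BoolAlg.{v} where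
  obj X := BoolAlg.of (Set X.unop)
  map f :=
    BoolAlg.ofHom
    { toFun := fun S => f.unop ⁻¹' S
      map_sup' := fun _ _ => rfl
      map_inf' := fun _ _ => rfl
      map_top' := rfl
      map_bot' := rfl }
  map_id _ := rfl
  map_comp _ _ := rfl

/-- A Boolean doctrine morphism: a finite-product-preserving functor together with a
natural transformation. -/
structure DoctrineHom {C : Type u₁} [Category.{v₁} C] {D : Type u₂} [Category.{v₂} D]
    (P : Cᵒᵖ ⥤ BoolAlg.{w}) (R : Dᵒᵖ ⥤ BoolAlg.{w}) where
  functor : C ⥤ D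
  preserves : PreservesFiniteProducts functor
  trans : P ⟶ functor.op ⋙ R

/-- Composition of Boolean doctrine morphisms. -/
def DoctrineHom.comp {C : Type u₁} [Category.{v₁} C] {D : Type u₂} [Category.{v₂} D]
    {E : Type u₃} [Category.{v₃} E]
    {P : Cᵒᵖ ⥤ BoolAlg.{w}} {R : Dᵒᵖ ⥤ BoolAlg.{w}} {S : Eᵒᵖ ⥤ BoolAlg.{w}}
    (Φ : DoctrineHom P R) (Ψ : DoctrineHom R S) : DoctrineHom P S where
  functor := Φ.functor ⋙ Ψ.functor
  preserves := by
    have := Φ.preserves; have := Ψ.preserves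
    infer_instance
  trans := Φ.trans ≫ Functor.whiskerLeft Φ.functor.op Ψ.trans

/-- A first-order structure on a Boolean doctrine: fiberwise right adjoints to reindexing
along first projections, satisfying the Beck–Chevalley condition. -/
structure FOStructure {C : Type u₁} [Category.{v₁} C] [HasFiniteProducts C]
    (P : Cᵒᵖ ⥤ BoolAlg.{w}) where
  fa : ∀ X Y : C, P.obj (op (X ⨯ Y)) → P.obj (op X)
  adj : ∀ (X Y : C) (α : P.obj (op X)) (β : P.obj (op (X ⨯ Y))),
      α ≤ fa X Y β ↔ P.map (prod.fst : X ⨯ Y ⟶ X).op α ≤ β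
  bc : ∀ (X X' Y : C) (f : X' ⟶ X) (β : P.obj (op (X ⨯ Y))),
      P.map f.op (fa X Y β) = fa X' Y (P.map (prod.map f (𝟙 Y)).op β)

/-- The existential quantifier `∃ = ¬∀¬` associated to a first-order structure. -/
noncomputable def FOStructure.ex {C : Type u₁} [Category.{v₁} C] [HasFiniteProducts C]
    {P : Cᵒᵖ ⥤ BoolAlg.{w}} (fo : FOStructure P) (X Y : C)
    (β : P.obj (op (X ⨯ Y))) : P.obj (op X) :=
  (fo.fa X Y βᶜ)ᶜ

/-- The canonical comparison morphism `M X ⨯ M Y ⟶ M (X ⨯ Y)` of a Boolean doctrine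
morphism, inverse to the product comparison morphism. -/
noncomputable def DoctrineHom.prodPair {C : Type u₁} [Category.{v₁} C] [HasFiniteProducts C]
    {D : Type u₂} [Category.{v₂} D] [HasFiniteProducts D]
    {P : Cᵒᵖ ⥤ BoolAlg.{w}} {R : Dᵒᵖ ⥤ BoolAlg.{w}} (Φ : DoctrineHom P R) (X Y : C) :
    (Φ.functor.obj X ⨯ Φ.functor.obj Y) ⟶ Φ.functor.obj (X ⨯ Y) :=
  letI := Φ.preserves
  (PreservesLimitPair.iso Φ.functor X Y).inv

/-- The image of an element of `P (X ⨯ Y)` in `R (M X ⨯ M Y)`, transported along the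
canonical isomorphism `M (X ⨯ Y) ≅ M X ⨯ M Y`. -/
noncomputable def DoctrineHom.transProd {C : Type u₁} [Category.{v₁} C] [HasFiniteProducts C]
    {D : Type u₂} [Category.{v₂} D] [HasFiniteProducts D]
    {P : Cᵒᵖ ⥤ BoolAlg.{w}} {R : Dᵒᵖ ⥤ BoolAlg.{w}} (Φ : DoctrineHom P R) (X Y : C)
    (α : P.obj (op (X ⨯ Y))) : R.obj (op (Φ.functor.obj X ⨯ Φ.functor.obj Y)) :=
  R.map (Φ.prodPair X Y).op (Φ.trans.app (op (X ⨯ Y)) α)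

/-- A Boolean doctrine morphism between first-order Boolean doctrines is first-order when it
commutes with the universal quantifiers. -/
def DoctrineHom.IsFO {C : Type u₁} [Category.{v₁} C] [HasFiniteProducts C]
    {D : Type u₂} [Category.{v₂} D] [HasFiniteProducts D]
    {P : Cᵒᵖ ⥤ BoolAlg.{w}} {R : Dᵒᵖ ⥤ BoolAlg.{w}} (Φ : DoctrineHom P R)
    (foP : FOStructure P) (foR : FOStructure R) : Prop :=
  ∀ (X Y : C) (β : P.obj (op (X ⨯ Y))),
    (Φ.trans.app (op X) (foP.fa X Y β) : R.obj (op (Φ.functor.obj X))) =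
      foR.fa (Φ.functor.obj X) (Φ.functor.obj Y) (Φ.transProd X Y β)

/-- The Boolean doctrine morphism with identity functor part induced by a natural
transformation between two doctrines over the same base. -/
def idDoctrineHom {C : Type u₁} [Category.{v₁} C] {P Q : Cᵒᵖ ⥤ BoolAlg.{w}} (η : P ⟶ Q) :
    DoctrineHom P Q where
  functor := 𝟭 C
  preserves := inferInstance
  trans := η

/-- A quantifier completion of a Boolean doctrine `P`: a first-order Boolean doctrine `Q`
over the same base category together with a Boolean doctrine morphism `(𝟭 C, ι) : P ⟶ Q`
whose functor part is the identity, such that every Boolean doctrine morphism from `P` to a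
first-order Boolean doctrine factors uniquely through it via a first-order Boolean doctrine
morphism. -/
structure QuantifierCompletion.{w', v', u', v₁', u₁'} {C : Type u₁'} [Category.{v₁'} C]
    [HasFiniteProducts C] (P : Cᵒᵖ ⥤ BoolAlg.{w'}) where
  Q : Cᵒᵖ ⥤ BoolAlg.{w'}
  fo : FOStructure Q
  ι : P ⟶ Q
  univ : ∀ {D : Type u'} [Category.{v'} D] [HasFiniteProducts D]
      (R : Dᵒᵖ ⥤ BoolAlg.{w'}) (foR : FOStructure R) (Φ : DoctrineHom P R),
      ∃! Ψ : DoctrineHom Q R, Ψ.IsFO fo foR ∧ Φ = (idDoctrineHom ι).comp Ψ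

/-- A propositional model of a Boolean doctrine: a Boolean doctrine morphism to the
subsets doctrine. -/
abbrev PropModel {C : Type u} [Category.{v} C] (P : Cᵒᵖ ⥤ BoolAlg.{v}) :=
  DoctrineHom P subsetsDoctrine.{v}

/-- The subset of `M X` interpreting an element `α ∈ P X` in a propositional model. -/
def PropModel.interp {C : Type u} [Category.{v} C] {P : Cᵒᵖ ⥤ BoolAlg.{v}}
    (M : PropModel P) {X : C} (α : P.obj (op X)) : Set (M.functor.obj X) :=
  M.trans.app (op X) α



/-- The object map of a Boolean doctrine morphism. -/
abbrev DoctrineHom.onObj {C : Type u₁} [Category.{v₁} C] {D : Type u₂} [Category.{v₂} D]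
    {P : Cᵒᵖ ⥤ BoolAlg.{w}} {R : Dᵒᵖ ⥤ BoolAlg.{w}} (Φ : DoctrineHom P R) (X : C) : D :=
  Φ.functor.obj X

/-- The component at `X` of the natural transformation of a Boolean doctrine morphism,
applied to an element of the fiber. -/
abbrev DoctrineHom.appAt {C : Type u₁} [Category.{v₁} C] {D : Type u₂} [Category.{v₂} D]
    {P : Cᵒᵖ ⥤ BoolAlg.{w}} {R : Dᵒᵖ ⥤ BoolAlg.{w}} (Φ : DoctrineHom P R) (X : C)
    (a : P.obj (op X)) : R.obj (op (Φ.functor.obj X)) :=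
  Φ.trans.app (op X) a


section Auxx

variable {C : Type u} [SmallCategory C] [HasFiniteProducts C]

instance (X Y : BoolAlg) : BoundedLatticeHomClass (X ⟶ Y) X Y where
  map_sup f := map_sup f.hom
  map_inf f := map_inf f.hom
  map_top f := map_top f.hom
  map_bot f := map_bot f.hom

lemma boolAlg_comp_apply {X Y Z : BoolAlg} (f : X ⟶ Y) (g : Y ⟶ Z) (a : X) :
    (f ≫ g) a = g (f a) := rfl

/-- The propositional model associated to a prime ideal of the fiber at `W`,
with functor part `Hom(W, -)`. -/
noncomputable def idealModel (P : Cᵒᵖ ⥤ BoolAlg.{u}) (W : C)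
    (J : Order.Ideal (P.obj (op W))) (hJ : J.IsPrime) : PropModel P where
  functor := coyoneda.obj (op W)
  preserves := by constructor; intro n; infer_instance
  trans :=
    { app := fun X => BoolAlg.ofHom
        { toFun := fun a => {f : W ⟶ X.unop | P.map (Quiver.Hom.op f) a ∉ J}
          map_sup' := fun a b => by
            apply Set.ext; intro f
            show P.map (Quiver.Hom.op f) (a ⊔ b) ∉ J ↔
              P.map (Quiver.Hom.op f) a ∉ J ∨ P.map (Quiver.Hom.op f) b ∉ J
            rw [map_sup, Order.Ideal.sup_mem_iff]
            tauto
          map_inf' := fun a b => by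
            apply Set.ext; intro f
            show P.map (Quiver.Hom.op f) (a ⊓ b) ∉ J ↔
              P.map (Quiver.Hom.op f) a ∉ J ∧ P.map (Quiver.Hom.op f) b ∉ J
            rw [map_inf]
            constructor
            · intro h
              exact ⟨fun ha => h (J.lower inf_le_left ha),
                fun hb => h (J.lower inf_le_right hb)⟩
            · rintro ⟨ha, hb⟩ hab
              rcases hJ.mem_or_mem hab with h | h
              · exact ha h
              · exact hb h
          map_top' := by
            apply Set.ext; intro f
            show P.map (Quiver.Hom.op f) ⊤ ∉ J ↔ True
            rw [map_top]
            simp [hJ.toIsProper.top_notMem]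
          map_bot' := by
            apply Set.ext; intro f
            show P.map (Quiver.Hom.op f) ⊥ ∉ J ↔ False
            rw [map_bot]
            simp [J.bot_mem] }
      naturality := fun X X' h => by
        apply DFunLike.ext; intro a
        apply Set.ext; intro f
        show P.map (Quiver.Hom.op f) (P.map h a) ∉ J ↔
          P.map (Quiver.Hom.op (f ≫ h.unop)) a ∉ J
        rw [op_comp, Quiver.Hom.op_unop, P.map_comp, boolAlg_comp_apply] }

lemma mem_finset_inf_set {γ : Type*} {ι : Type*} {s : Finset ι} {S : ι → Set γ} {w : γ} :
    w ∈ s.inf S ↔ ∀ i ∈ s, w ∈ S i := by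
  classical
  induction s using Finset.induction with
  | empty => simp
  | insert h ih => simp_all [Finset.inf_insert]

lemma mem_finset_sup_set {γ : Type*} {ι : Type*} {s : Finset ι} {S : ι → Set γ} {w : γ} :
    w ∈ s.sup S ↔ ∃ i ∈ s, w ∈ S i := by
  classical
  induction s using Finset.induction with
  | empty => simp
  | insert h ih => simp_all [Finset.sup_insert, or_and_right, exists_or]

set_option linter.unusedSectionVars false in
lemma interp_nat (P : Cᵒᵖ ⥤ BoolAlg.{u}) (M : PropModel P) {X X' : C} (gg : X' ⟶ X)
    (a : P.obj (op X)) :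
    PropModel.interp M (P.map gg.op a) = M.functor.map gg ⁻¹' PropModel.interp M a :=
  DFunLike.congr_fun (M.trans.naturality gg.op) a

end Auxx

theorem stmt2 {C : Type u} [SmallCategory C] [HasFiniteProducts C]
    (P : Cᵒᵖ ⥤ BoolAlg.{u}) {ibar jbar : ℕ} (Y : Fin ibar → C) (Z : Fin jbar → C)
    (α : ∀ i, P.obj (op (Y i))) (β : ∀ j, P.obj (op (Z j))) :
    (∀ M : PropModel P,
        (∀ i, ∀ x : M.functor.obj (Y i), x ∈ PropModel.interp M (α i)) →
          ∃ j, ∀ x : M.functor.obj (Z j), x ∈ PropModel.interp M (β j)) ↔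
      ∃ (n : ℕ) (l : Fin n → Fin ibar) (g : ∀ i : Fin n, (∏ᶜ Z) ⟶ Y (l i)),
        (Finset.univ.inf fun i => P.map (g i).op (α (l i))) ≤
          Finset.univ.sup fun j => P.map (Pi.π Z j).op (β j) := by
  classical
  constructor
  · -- (1) → (2)
    intro h1
    by_contra h2
    push_neg at h2
    set W : C := ∏ᶜ Z with hW
    set b : P.obj (op W) := Finset.univ.sup (fun j => P.map (Pi.π Z j).op (β j)) with hb
    set F : (Σ i : Fin ibar, (W ⟶ Y i)) → P.obj (op W) :=
      fun p => P.map p.2.op (α p.1) with hF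
    have key : ∀ T : Finset (Σ i : Fin ibar, (W ⟶ Y i)), ¬ (T.inf F ≤ b) := by
      intro T hT
      refine h2 T.card (fun i => (T.equivFin.symm i).1.1)
        (fun i => (T.equivFin.symm i).1.2) (le_trans (Finset.le_inf ?_) hT)
      intro p hp
      have : (Finset.univ.inf fun i =>
          P.map ((T.equivFin.symm i).1.2).op (α ((T.equivFin.symm i).1.1))) ≤
          F ((T.equivFin.symm (T.equivFin ⟨p, hp⟩)).1) :=
        Finset.inf_le (Finset.mem_univ _)
      simpa using this
    set S : Set (P.obj (op W)) :=
      {x | ∃ T : Finset (Σ i : Fin ibar, (W ⟶ Y i)), T.inf F ⊓ bᶜ ≤ x} with hSdef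
    have hSfilter : Order.IsPFilter S := by
      refine Order.IsPFilter.of_def ⟨⊤, ∅, le_top⟩ ?_ ?_
      · rintro x ⟨T₁, h₁⟩ y ⟨T₂, h₂⟩
        refine ⟨(T₁ ∪ T₂).inf F ⊓ bᶜ, ⟨T₁ ∪ T₂, le_rfl⟩, ?_, ?_⟩
        · exact le_trans (inf_le_inf_right _
            (Finset.inf_mono Finset.subset_union_left)) h₁
        · exact le_trans (inf_le_inf_right _
            (Finset.inf_mono Finset.subset_union_right)) h₂
      · rintro x y hxy ⟨T, hT⟩
        exact ⟨T, hT.trans hxy⟩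
    have hdisj : Disjoint (hSfilter.toPFilter : Set (P.obj (op W)))
        ((Order.Ideal.principal b : Order.Ideal (P.obj (op W))) : Set (P.obj (op W))) := by
      rw [Set.disjoint_left]
      rintro x ⟨T, hT⟩ hxb
      have hxb' : x ≤ b := Order.Ideal.mem_principal.mp hxb
      have h0 : T.inf F ⊓ bᶜ = ⊥ :=
        le_antisymm (le_trans (le_inf (hT.trans hxb') inf_le_right)
          (le_of_eq inf_compl_eq_bot)) bot_le
      exact key T (by rwa [← sdiff_eq, sdiff_eq_bot_iff] at h0)
    obtain ⟨J, hJprime, hbJ, hdisjJ⟩ :=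
      DistribLattice.prime_ideal_of_disjoint_filter_ideal hdisj
    have hmem : ∀ x ∈ S, x ∉ J := by
      intro x hx
      exact Set.disjoint_left.mp hdisjJ hx
    have hpremise : ∀ (i : Fin ibar)
        (f : (idealModel P W J hJprime).functor.obj (Y i)),
        f ∈ PropModel.interp (idealModel P W J hJprime) (α i) := by
      intro i f
      show P.map (Quiver.Hom.op f) (α i) ∉ J
      refine hmem _ ⟨{⟨i, f⟩}, ?_⟩
      rw [Finset.inf_singleton]
      exact inf_le_left
    obtain ⟨j, hj⟩ := h1 (idealModel P W J hJprime) hpremise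
    have hπ : P.map (Pi.π Z j).op (β j) ∉ J := hj (Pi.π Z j)
    refine hπ (J.lower ?_ (hbJ (Order.Ideal.mem_principal.mpr le_rfl)))
    rw [hb]
    exact Finset.le_sup (f := fun j => P.map (Pi.π Z j).op (β j)) (Finset.mem_univ j)
  · -- (2) → (1)
    rintro ⟨n, l, g, hle⟩ M hprem
    by_contra hcon
    push_neg at hcon
    choose x hx using hcon
    letI : PreservesFiniteProducts M.functor := M.preserves
    haveI : PreservesLimitsOfShape (Discrete (Fin jbar)) M.functor :=
      M.preserves.preserves jbar
    let e := PreservesProduct.iso M.functor Z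
    let p : ∏ᶜ (fun j => M.functor.obj (Z j)) := (Types.productIso _).inv x
    let w : M.functor.obj (∏ᶜ Z) := e.inv p
    have hw : ∀ j, M.functor.map (Pi.π Z j) w = x j := by
      intro j
      have h1 : M.functor.map (Pi.π Z j) w =
          Pi.π (fun j => M.functor.obj (Z j)) j (e.hom w) := by
        have := CategoryTheory.congr_fun (piComparison_comp_π M.functor Z j) w
        rw [PreservesProduct.iso_hom]
        exact this.symm
      rw [h1]
      show Pi.π (fun j => M.functor.obj (Z j)) j (e.hom (e.inv p)) = x j
      have h2 : e.hom (e.inv p) = p := CategoryTheory.congr_fun e.inv_hom_id p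
      rw [h2]
      exact CategoryTheory.congr_fun (Types.productIso_inv_comp_π (fun j => M.functor.obj (Z j)) j) x
    have hTle : PropModel.interp M (Finset.univ.inf fun i => P.map (g i).op (α (l i))) ≤
        PropModel.interp M (Finset.univ.sup fun j => P.map (Pi.π Z j).op (β j)) :=
      OrderHomClass.mono (M.trans.app (op (∏ᶜ Z))) hle
    have hinf : PropModel.interp M (Finset.univ.inf fun i => P.map (g i).op (α (l i))) =
        Finset.univ.inf (fun i => (PropModel.interp M (P.map (g i).op (α (l i))) :
          Set (M.functor.obj (∏ᶜ Z)))) :=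
      map_finset_inf (M.trans.app (op (∏ᶜ Z))) Finset.univ _
    have hsup : PropModel.interp M (Finset.univ.sup fun j => P.map (Pi.π Z j).op (β j)) =
        Finset.univ.sup (fun j => (PropModel.interp M (P.map (Pi.π Z j).op (β j)) :
          Set (M.functor.obj (∏ᶜ Z)))) :=
      map_finset_sup (M.trans.app (op (∏ᶜ Z))) Finset.univ _
    have hwin : w ∈ PropModel.interp M
        (Finset.univ.inf fun i => P.map (g i).op (α (l i))) := by
      rw [hinf, mem_finset_inf_set]
      intro i _
      rw [interp_nat]
      exact hprem _ _
    have hwsup := hTle hwin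
    rw [hsup, mem_finset_sup_set] at hwsup
    obtain ⟨j, -, hjmem⟩ := hwsup
    rw [interp_nat, Set.mem_preimage, hw j] at hjmem
    exact hx j hjmem

end BooleanDoctrine
end

section
/- Let P : Cᵒᵖ → BoolAlg be a Boolean doctrine over a category C with finite products, and let A = (A_X)_{X ∈ C} be a family with A_X ⊆ P(X) for each X ∈ C. Then the universal filter for P generated by A is the family (F_X)_{X ∈ C} where F_X is the set of φ ∈ P(X) such that there are n ∈ ℕ (possibly 0), objects Y₁, …, Y_n ∈ C, elements α₁ ∈ A_{Y₁}, …, α_n ∈ A_{Y_n} and morphisms fᵢ : X → Yᵢ (i = 1, …, n) with P(f₁)(α₁) ∧ … ∧ P(f_n)(α_n) ≤ φ in P(X). -/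
open CategoryTheory CategoryTheory.Limits Opposite

universe w v u v₁ u₁ v₂ u₂ v₃ u₃

namespace BooleanDoctrine

instance inst_s10 (X Y : BoolAlg) : BoundedLatticeHomClass (X ⟶ Y) X Y where
  map_sup f := map_sup f.hom
  map_inf f := map_inf f.hom
  map_top f := map_top f.hom
  map_bot f := map_bot f.hom

theorem filter_finset_inf {A : Type*} [BooleanAlgebra A] {F : Set A} (hF : IsBAFilter F)
    {ι : Type*} (s : Finset ι) (g : ι → A) (hg : ∀ i ∈ s, g i ∈ F) : s.inf g ∈ F := by
  classical
  induction s using Finset.induction_on with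
  | empty => simpa using hF.1
  | insert _ _ hx ih =>
    rw [Finset.inf_insert]
    exact hF.2.1 _ _ (hg _ (Finset.mem_insert_self _ _))
      (ih fun i hi => hg i (Finset.mem_insert_of_mem hi))


theorem stmt10 {C : Type u₁} [Category.{v₁} C] [HasFiniteProducts C]
    (P : Cᵒᵖ ⥤ BoolAlg.{w}) (A Fgen : ∀ X : C, Set (P.obj (op X)))
    (hFgen : ∀ (X : C) (φ : P.obj (op X)),
      φ ∈ Fgen X ↔
        ∃ (n : ℕ) (Y : Fin n → C) (α : ∀ i, P.obj (op (Y i))) (f : ∀ i, X ⟶ Y i),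
          (∀ i, α i ∈ A (Y i)) ∧ (Finset.univ.inf fun i => P.map (f i).op (α i)) ≤ φ) :
    IsUniversalFilter P Fgen ∧ (∀ X : C, A X ⊆ Fgen X) ∧
      ∀ G : ∀ X : C, Set (P.obj (op X)),
        IsUniversalFilter P G → (∀ X : C, A X ⊆ G X) → ∀ X : C, Fgen X ⊆ G X := by
  refine ⟨⟨?_, ?_⟩, ?_, ?_⟩
  · -- reindexing
    intro X Y g φ hφ
    rw [hFgen] at hφ ⊢
    obtain ⟨n, Y', α, f, hA, hle⟩ := hφ
    refine ⟨n, Y', α, fun i => g ≫ f i, hA, ?_⟩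
    have hmap : P.map g.op (Finset.univ.inf fun i => P.map (f i).op (α i)) =
        Finset.univ.inf fun i => P.map (g ≫ f i).op (α i) := by
      rw [map_finset_inf]
      refine Finset.inf_congr rfl fun i _ => ?_
      simp [op_comp, P.map_comp]
    rw [← hmap]
    exact OrderHomClass.mono (P.map g.op).hom hle
  · -- filter
    intro X
    refine ⟨?_, ?_, ?_⟩
    · rw [hFgen]
      exact ⟨0, Fin.elim0, fun i => i.elim0, fun i => i.elim0, fun i => i.elim0, by simp⟩
    · intro a b ha hb
      rw [hFgen] at ha hb ⊢
      obtain ⟨n₁, Y₁, α₁, f₁, hA₁, hle₁⟩ := ha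
      obtain ⟨n₂, Y₂, α₂, f₂, hA₂, hle₂⟩ := hb
      set T := Σ Y : C, P.obj (op Y) × (X ⟶ Y) with hT
      set g : Fin (n₁ + n₂) → T :=
        Fin.append (fun i => ⟨Y₁ i, α₁ i, f₁ i⟩) (fun i => ⟨Y₂ i, α₂ i, f₂ i⟩) with hg
      refine ⟨n₁ + n₂, fun i => (g i).1, fun i => (g i).2.1, fun i => (g i).2.2, ?_, ?_⟩
      · intro i
        induction i using Fin.addCases with
        | left i =>
          show (g (Fin.castAdd n₂ i)).2.1 ∈ A (g (Fin.castAdd n₂ i)).1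
          rw [show g (Fin.castAdd n₂ i) = ⟨Y₁ i, α₁ i, f₁ i⟩ from Fin.append_left _ _ i]
          exact hA₁ i
        | right i =>
          show (g (Fin.natAdd n₁ i)).2.1 ∈ A (g (Fin.natAdd n₁ i)).1
          rw [show g (Fin.natAdd n₁ i) = ⟨Y₂ i, α₂ i, f₂ i⟩ from Fin.append_right _ _ i]
          exact hA₂ i
      · have key : ∀ (s : T → P.obj (op X)), ∀ i, Finset.univ.inf (fun j => s (g j)) ≤ s (g i) :=
          fun s i => Finset.inf_le (Finset.mem_univ i)
      -- inf over combined ≤ inf over each part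
        set h : T → P.obj (op X) := fun s => P.map s.2.2.op s.2.1 with hh
        have h1 : Finset.univ.inf (fun j => h (g j)) ≤ a := by
          refine le_trans (Finset.le_inf fun i _ => ?_) hle₁
          calc Finset.univ.inf (fun j => h (g j)) ≤ h (g (Fin.castAdd n₂ i)) := key h _
            _ = P.map (f₁ i).op (α₁ i) := by
              rw [show g (Fin.castAdd n₂ i) = ⟨Y₁ i, α₁ i, f₁ i⟩ from Fin.append_left _ _ i]
        have h2 : Finset.univ.inf (fun j => h (g j)) ≤ b := by
          refine le_trans (Finset.le_inf fun i _ => ?_) hle₂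
          calc Finset.univ.inf (fun j => h (g j)) ≤ h (g (Fin.natAdd n₁ i)) := key h _
            _ = P.map (f₂ i).op (α₂ i) := by
              rw [show g (Fin.natAdd n₁ i) = ⟨Y₂ i, α₂ i, f₂ i⟩ from Fin.append_right _ _ i]
        exact le_inf h1 h2
    · intro a b ha hab
      rw [hFgen] at ha ⊢
      obtain ⟨n, Y, α, f, hA, hle⟩ := ha
      exact ⟨n, Y, α, f, hA, hle.trans hab⟩
  · -- A ⊆ Fgen
    intro X a ha
    rw [hFgen]
    refine ⟨1, fun _ => X, fun _ => a, fun _ => 𝟙 X, fun _ => ha, ?_⟩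
    simp only [Finset.inf_const, Finset.univ_nonempty, op_id, CategoryTheory.Functor.map_id]
    exact le_of_eq rfl
  · -- minimality
    intro G hG hAG X φ hφ
    rw [hFgen] at hφ
    obtain ⟨n, Y, α, f, hA, hle⟩ := hφ
    refine (hG.2 X).2.2 _ φ ?_ hle
    exact filter_finset_inf (hG.2 X) _ _ fun i _ => hG.1 X (Y i) (f i) (α i) (hAG (Y i) (hA i))


end BooleanDoctrine
end

section
/- Let P : Cᵒᵖ → BoolAlg be a Boolean doctrine over a category C with finite products, let F = (F_X)_{X ∈ C} be a universal filter for P, I = (I_X)_{X ∈ C} a universal ideal for P, Y ∈ C and α ∈ P(Y). Then: (1) the universal filter generated by F together with α intersects I in some component if and only if there are X ∈ C, n ∈ ℕ, morphisms fᵢ : X → Y (i = 1, …, n) and β ∈ F_X such that β ∧ ⋀_{i=1}^{n} P(fᵢ)(α) ∈ I_X; and (2) the universal ideal generated by I together with α intersects F in some component if and only if there is X ∈ C with I_X ∩ F_X ≠ ∅, or there are Z ∈ C and γ ∈ I_Z such that P(pr₁)(α) ∨ P(pr₂)(γ) ∈ F_{Y×Z}. -/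
open CategoryTheory CategoryTheory.Limits Opposite

universe w v u v₁ u₁ v₂ u₂ v₃ u₃

namespace BooleanDoctrine

set_option linter.unusedSectionVars false

section Stmt14Aux

variable {C : Type u₁} [Category.{v₁} C] [HasFiniteProducts C] (P : Cᵒᵖ ⥤ BoolAlg.{w})

/-- View a `BoolAlg` morphism as a bounded lattice homomorphism. -/
def blh {A B : BoolAlg} (g : A ⟶ B) : BoundedLatticeHom A B := g.hom

lemma pmap_mono {A B : Cᵒᵖ} (u : A ⟶ B) {a b : P.obj A} (h : a ≤ b) :
    P.map u a ≤ P.map u b :=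
  OrderHomClass.mono (blh (P.map u)) h

lemma pmap_inf {A B : Cᵒᵖ} (u : A ⟶ B) (a b : P.obj A) :
    P.map u (a ⊓ b) = P.map u a ⊓ P.map u b :=
  map_inf (blh (P.map u)) a b

lemma pmap_sup {A B : Cᵒᵖ} (u : A ⟶ B) (a b : P.obj A) :
    P.map u (a ⊔ b) = P.map u a ⊔ P.map u b :=
  map_sup (blh (P.map u)) a b

lemma pmap_fininf {A B : Cᵒᵖ} (u : A ⟶ B) {ι : Type*} (s : Finset ι) (g : ι → P.obj A) :
    P.map u (s.inf g) = s.inf fun i => P.map u (g i) :=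
  map_finset_inf (blh (P.map u)) s g

lemma pmap_comp {X Y Z : C} (u : X ⟶ Y) (v : Y ⟶ Z) (x : P.obj (op Z)) :
    P.map (u ≫ v).op x = P.map u.op (P.map v.op x) := by
  rw [op_comp, P.map_comp]; rfl

lemma pmap_id {X : C} (x : P.obj (op X)) : P.map (𝟙 X).op x = x := by
  rw [op_id, P.map_id]; rfl

lemma inf_univ_equiv {A : Type*} [SemilatticeInf A] [OrderTop A] {ι κ : Type*}
    [Fintype ι] [Fintype κ] (e : ι ≃ κ) (g : κ → A) :
    (Finset.univ.inf fun i => g (e i)) = Finset.univ.inf g := by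
  apply le_antisymm
  · refine Finset.le_inf fun k _ => ?_
    have := Finset.inf_le (f := fun i => g (e i)) (Finset.mem_univ (e.symm k))
    simpa using this
  · exact Finset.le_inf fun i _ => Finset.inf_le (Finset.mem_univ (e i))

lemma inf_univ_prod {A : Type*} [SemilatticeInf A] [OrderTop A] {ι κ : Type*}
    [Fintype ι] [Fintype κ] (g : ι × κ → A) :
    Finset.univ.inf g = Finset.univ.inf fun i => Finset.univ.inf fun j => g (i, j) := by
  rw [← Finset.univ_product_univ, Finset.inf_product_left]

lemma inf_prod_sup {A : Type*} [DistribLattice A] [OrderTop A] {ι κ : Type*}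
    [Fintype ι] [Fintype κ] (a : ι → A) (b : κ → A) :
    (Finset.univ.inf fun p : ι × κ => a p.1 ⊔ b p.2) =
      Finset.univ.inf a ⊔ Finset.univ.inf b := by
  rw [inf_univ_prod]
  simp only [← Finset.inf_sup_distrib_left, ← Finset.inf_sup_distrib_right]

lemma inf_univ_sum {A : Type*} [SemilatticeInf A] [OrderTop A] {ι κ : Type*}
    [Fintype ι] [Fintype κ] (g : ι ⊕ κ → A) :
    Finset.univ.inf g =
      (Finset.univ.inf fun i => g (.inl i)) ⊓ (Finset.univ.inf fun j => g (.inr j)) := by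
  apply le_antisymm
  · exact le_inf (Finset.le_inf fun i _ => Finset.inf_le (Finset.mem_univ _))
      (Finset.le_inf fun j _ => Finset.inf_le (Finset.mem_univ _))
  · refine Finset.le_inf fun x _ => ?_
    cases x with
    | inl i => exact inf_le_left.trans (Finset.inf_le (Finset.mem_univ i))
    | inr j => exact inf_le_right.trans (Finset.inf_le (Finset.mem_univ j))

lemma baFilter_inf {A : Type*} [BooleanAlgebra A] {F : Set A} (hF : IsBAFilter F)
    {ι : Type*} (s : Finset ι) (g : ι → A) (h : ∀ i ∈ s, g i ∈ F) : s.inf g ∈ F := by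
  induction s using Finset.cons_induction with
  | empty => simpa using hF.1
  | cons i s hi ih =>
    rw [Finset.inf_cons]
    exact hF.2.1 _ _ (h i (Finset.mem_cons_self i s))
      (ih fun j hj => h j (Finset.mem_cons_of_mem hj))

variable (Y : C)

/-- Iterated product `Y ⨯ (Y ⨯ ⋯ (Y ⨯ Z))` with `n` copies of `Y`. -/
noncomputable def powProd : ℕ → C → C
  | 0, Z => Z
  | n + 1, Z => Y ⨯ powProd n Z

variable (α : P.obj (op Y))

/-- The element `P(π₁)(α) ⊔ ⋯ ⊔ P(πₙ)(α) ⊔ P(π_Z)(γ)` of `P (Yⁿ ⨯ Z)`. -/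
noncomputable def deltaEl : ∀ (n : ℕ) (Z : C), P.obj (op Z) → P.obj (op (powProd Y n Z))
  | 0, _, γ => γ
  | n + 1, Z, γ =>
      P.map (prod.fst : Y ⨯ powProd Y n Z ⟶ Y).op α ⊔
        P.map (prod.snd : Y ⨯ powProd Y n Z ⟶ powProd Y n Z).op (deltaEl n Z γ)

lemma deltaEl_succ (n : ℕ) (Z : C) (γ : P.obj (op Z)) :
    deltaEl P Y α (n + 1) Z γ =
      P.map (prod.fst : Y ⨯ powProd Y n Z ⟶ Y).op α ⊔
        P.map (prod.snd : Y ⨯ powProd Y n Z ⟶ powProd Y n Z).op (deltaEl P Y α n Z γ) := rfl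

lemma deltaEl_mono {n : ℕ} {Z : C} {γ γ' : P.obj (op Z)} (h : γ ≤ γ') :
    deltaEl P Y α n Z γ ≤ deltaEl P Y α n Z γ' := by
  induction n with
  | zero => exact h
  | succ n ih => exact sup_le_sup le_rfl (pmap_mono P _ ih)

/-- Functorial action on the `Z`-part of `powProd`. -/
noncomputable def powMap {Z' Z : C} (u : Z' ⟶ Z) : ∀ n, powProd Y n Z' ⟶ powProd Y n Z
  | 0 => u
  | n + 1 => prod.map (𝟙 Y) (powMap u n)

lemma pmap_powMap {Z' Z : C} (u : Z' ⟶ Z) (n : ℕ) (γ : P.obj (op Z)) :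
    P.map (powMap Y u n).op (deltaEl P Y α n Z γ) = deltaEl P Y α n Z' (P.map u.op γ) := by
  induction n with
  | zero => rfl
  | succ n ih =>
    show P.map (prod.map (𝟙 Y) (powMap Y u n)).op _ = _
    rw [deltaEl_succ, pmap_sup, ← pmap_comp, ← pmap_comp,
      prod.map_fst, prod.map_snd, pmap_comp, pmap_comp, pmap_id, ih]
    rfl

/-- Projection dropping the outer `k` copies of `Y`. -/
noncomputable def dropOuter (n : ℕ) {Z : C} : ∀ k, powProd Y (n + k) Z ⟶ powProd Y n Z
  | 0 => 𝟙 _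
  | k + 1 => (prod.snd : Y ⨯ powProd Y (n + k) Z ⟶ powProd Y (n + k) Z) ≫ dropOuter n k

lemma pmap_dropOuter (n : ℕ) {Z : C} (k : ℕ) (γ : P.obj (op Z)) :
    P.map (dropOuter Y n k).op (deltaEl P Y α n Z γ) ≤ deltaEl P Y α (n + k) Z γ := by
  induction k with
  | zero => exact le_of_eq (pmap_id P _)
  | succ k ih =>
    show P.map ((prod.snd : Y ⨯ powProd Y (n + k) Z ⟶ _) ≫ dropOuter Y n k).op _ ≤ _
    rw [pmap_comp]
    exact le_trans (pmap_mono P _ ih) le_sup_right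

/-- Projection to the `Z`-part. -/
noncomputable def projZ {Z : C} : ∀ n, powProd Y n Z ⟶ Z
  | 0 => 𝟙 _
  | n + 1 => (prod.snd : Y ⨯ powProd Y n Z ⟶ powProd Y n Z) ≫ projZ n

lemma pmap_projZ {Z : C} (n : ℕ) (γ : P.obj (op Z)) :
    P.map (projZ Y n).op γ ≤ deltaEl P Y α n Z γ := by
  induction n with
  | zero => exact le_of_eq (pmap_id P _)
  | succ n ih =>
    show P.map ((prod.snd : Y ⨯ powProd Y n Z ⟶ _) ≫ projZ Y n).op _ ≤ _
    rw [pmap_comp]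
    exact le_trans (pmap_mono P _ ih) le_sup_right

/-- Projection dropping the inner `n` copies of `Y`. -/
noncomputable def dropInner (n : ℕ) {Z : C} : ∀ k, powProd Y (n + k) Z ⟶ powProd Y k Z
  | 0 => projZ Y n
  | k + 1 => prod.map (𝟙 Y) (dropInner n k)

lemma pmap_dropInner (n : ℕ) {Z : C} (k : ℕ) (γ : P.obj (op Z)) :
    P.map (dropInner Y n k).op (deltaEl P Y α k Z γ) ≤ deltaEl P Y α (n + k) Z γ := by
  induction k with
  | zero => exact pmap_projZ P Y α n γ
  | succ k ih =>
    show P.map (prod.map (𝟙 Y) (dropInner Y n k)).op _ ≤ _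
    rw [deltaEl_succ, pmap_sup, ← pmap_comp, ← pmap_comp,
      prod.map_fst, prod.map_snd, pmap_comp, pmap_comp, pmap_id]
    exact sup_le_sup le_rfl (pmap_mono P _ ih)

/-- The diagonal-type map `Y ⨯ Z ⟶ Y ⨯ (Yᵏ ⨯ Z)` repeating the `Y`-coordinate. -/
noncomputable def diagMap {Z : C} : ∀ k, (Y ⨯ Z : C) ⟶ (Y ⨯ powProd Y k Z : C)
  | 0 => 𝟙 _
  | k + 1 => prod.lift prod.fst (diagMap k)

lemma pmap_diagMap {Z : C} (k : ℕ) (γ : P.obj (op Z)) :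
    P.map (diagMap Y k).op (deltaEl P Y α (k + 1) Z γ) =
      P.map (prod.fst : Y ⨯ Z ⟶ Y).op α ⊔ P.map (prod.snd : Y ⨯ Z ⟶ Z).op γ := by
  induction k with
  | zero => exact (pmap_id P _).trans rfl
  | succ k ih =>
    have h1 : diagMap Y (Z := Z) (k + 1) ≫ (prod.fst : Y ⨯ powProd Y (k + 1) Z ⟶ Y) =
        prod.fst := prod.lift_fst _ _
    have h2 : diagMap Y (Z := Z) (k + 1) ≫
        (prod.snd : Y ⨯ powProd Y (k + 1) Z ⟶ powProd Y (k + 1) Z) = diagMap Y k :=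
      prod.lift_snd _ _
    calc P.map (diagMap Y (k + 1)).op (deltaEl P Y α (k + 1 + 1) Z γ)
        = P.map (diagMap Y (k + 1) ≫ (prod.fst : Y ⨯ powProd Y (k + 1) Z ⟶ Y)).op α ⊔
            P.map (diagMap Y (k + 1) ≫
              (prod.snd : Y ⨯ powProd Y (k + 1) Z ⟶ powProd Y (k + 1) Z)).op
              (deltaEl P Y α (k + 1) Z γ) := by
          rw [deltaEl_succ, pmap_sup, pmap_comp, pmap_comp]
      _ = P.map (prod.fst : Y ⨯ Z ⟶ Y).op α ⊔
            P.map (diagMap Y k).op (deltaEl P Y α (k + 1) Z γ) := by rw [h1, h2]; congr 1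
      _ = P.map (prod.fst : Y ⨯ Z ⟶ Y).op α ⊔
            (P.map (prod.fst : Y ⨯ Z ⟶ Y).op α ⊔ P.map (prod.snd : Y ⨯ Z ⟶ Z).op γ) := by
          rw [ih]
      _ = _ := by rw [← sup_assoc, sup_idem]

end Stmt14Aux

section Stmt14Main

variable {C : Type u₁} [Category.{v₁} C] [HasFiniteProducts C] (P : Cᵒᵖ ⥤ BoolAlg.{w})
variable (F I : ∀ X : C, Set (P.obj (op X))) (Y : C) (α : P.obj (op Y))

/-- Explicit description of the universal filter generated by `F` and `α`. -/
def filtExt : ∀ X : C, Set (P.obj (op X)) := fun X =>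
  {φ | ∃ (n : ℕ) (f : Fin n → (X ⟶ Y)) (β : P.obj (op X)), β ∈ F X ∧
    β ⊓ (Finset.univ.inf fun i => P.map (f i).op α) ≤ φ}

/-- Explicit description of the universal ideal generated by `I` and `α`. -/
def idealExt : ∀ X : C, Set (P.obj (op X)) := fun X =>
  {φ | ∃ (n : ℕ) (Z : C) (γ : P.obj (op Z)), γ ∈ I Z ∧
    ∃ (m : ℕ) (f : Fin m → (powProd Y n Z ⟶ X)),
      (Finset.univ.inf fun j => P.map (f j).op φ) ≤ deltaEl P Y α n Z γ}


lemma filtExt_isUniversalFilter (hF : IsUniversalFilter P F) :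
    IsUniversalFilter P (filtExt P F Y α) := by
  constructor
  · rintro X X' u φ ⟨n, f, β, hβ, hle⟩
    refine ⟨n, fun i => u ≫ f i, P.map u.op β, hF.1 _ _ _ _ hβ, ?_⟩
    have h1 : (Finset.univ.inf fun i => P.map (u ≫ f i).op α) =
        P.map u.op (Finset.univ.inf fun i => P.map (f i).op α) := by
      rw [pmap_fininf]
      exact Finset.inf_congr rfl fun i _ => pmap_comp P u (f i) α
    rw [h1, ← pmap_inf]
    exact pmap_mono P _ hle
  · intro X
    refine ⟨⟨0, fun i => i.elim0, ⊤, (hF.2 X).1, le_top⟩, ?_, ?_⟩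
    · rintro a b ⟨n₁, f, β₁, hβ₁, h₁⟩ ⟨n₂, g, β₂, hβ₂, h₂⟩
      refine ⟨n₁ + n₂, fun k => Sum.elim f g (finSumFinEquiv.symm k), β₁ ⊓ β₂,
        (hF.2 X).2.1 _ _ hβ₁ hβ₂, ?_⟩
      have e1 : (Finset.univ.inf fun k : Fin (n₁ + n₂) =>
            P.map (Sum.elim f g (finSumFinEquiv.symm k)).op α) =
          (Finset.univ.inf fun i => P.map (f i).op α) ⊓
            (Finset.univ.inf fun j => P.map (g j).op α) := by
        rw [inf_univ_equiv finSumFinEquiv.symm (fun s => P.map (Sum.elim f g s).op α),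
          inf_univ_sum]
        rfl
      rw [e1]
      refine le_inf (le_trans ?_ h₁) (le_trans ?_ h₂)
      · exact inf_le_inf inf_le_left inf_le_left
      · exact inf_le_inf inf_le_right inf_le_right
    · rintro a b ⟨n, f, β, hβ, h⟩ hab
      exact ⟨n, f, β, hβ, h.trans hab⟩

lemma subset_filtExt (hF : IsUniversalFilter P F) (X : C) :
    F X ∪ familyOfPoints P (fun _ : PUnit => Y) (fun _ => α) X ⊆ filtExt P F Y α X := by
  rintro a (h | ⟨i, hh, rfl⟩)
  · exact ⟨0, fun i => i.elim0, a, h, inf_le_left⟩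
  · exact ⟨1, fun _ => eqToHom hh.symm, ⊤, (hF.2 X).1,
      inf_le_right.trans (Finset.inf_le (Finset.mem_univ 0))⟩

lemma alpha_mem_family :
    α ∈ familyOfPoints P (fun _ : PUnit => Y) (fun _ => α) Y :=
  ⟨PUnit.unit, rfl, by simp⟩

lemma subset_idealExt (hI : IsUniversalIdeal P I) (X : C) :
    I X ∪ familyOfPoints P (fun _ : PUnit => Y) (fun _ => α) X ⊆ idealExt P I Y α X := by
  rintro a (h | ⟨i, hh, rfl⟩)
  · exact ⟨0, X, a, h, 1, fun _ => 𝟙 X,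
      (Finset.inf_le (Finset.mem_univ 0)).trans (le_of_eq (pmap_id P a))⟩
  · refine ⟨1, ⊤_ C, ⊥, hI.2.2.2, 1,
      fun _ => (prod.fst : Y ⨯ powProd Y 0 (⊤_ C) ⟶ Y) ≫ eqToHom hh, ?_⟩
    have hmor : ((prod.fst : Y ⨯ powProd Y 0 (⊤_ C) ⟶ Y) ≫ eqToHom hh) ≫ eqToHom hh.symm =
        prod.fst := by rw [Category.assoc, eqToHom_trans, eqToHom_refl, Category.comp_id]
    calc (Finset.univ.inf fun j : Fin 1 =>
            P.map ((prod.fst : Y ⨯ powProd Y 0 (⊤_ C) ⟶ Y) ≫ eqToHom hh).op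
              (P.map (eqToHom hh.symm).op α))
        ≤ P.map ((prod.fst : Y ⨯ powProd Y 0 (⊤_ C) ⟶ Y) ≫ eqToHom hh).op
            (P.map (eqToHom hh.symm).op α) := Finset.inf_le (Finset.mem_univ 0)
      _ = P.map ((((prod.fst : Y ⨯ powProd Y 0 (⊤_ C) ⟶ Y) ≫ eqToHom hh)) ≫
            eqToHom hh.symm).op α := (pmap_comp P _ _ _).symm
      _ = P.map (prod.fst : Y ⨯ powProd Y 0 (⊤_ C) ⟶ Y).op α := by rw [hmor]
      _ ≤ (show P.obj (op (Y ⨯ powProd Y 0 (⊤_ C))) from deltaEl P Y α 1 (⊤_ C) ⊥) := le_sup_left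

lemma idealExt_isUniversalIdeal (hI : IsUniversalIdeal P I) :
    IsUniversalIdeal P (idealExt P I Y α) := by
  refine ⟨?_, ?_, ?_, ?_⟩
  · rintro X X' m g φ ⟨n, Z, γ, hγ, m', f', hle⟩
    refine ⟨n, Z, γ, hγ, m' * m,
      fun k => f' (finProdFinEquiv.symm k).1 ≫ g (finProdFinEquiv.symm k).2, ?_⟩
    have e1 : (Finset.univ.inf fun k : Fin (m' * m) =>
          P.map (f' (finProdFinEquiv.symm k).1 ≫ g (finProdFinEquiv.symm k).2).op φ) =
        Finset.univ.inf fun p : Fin m' × Fin m => P.map (f' p.1 ≫ g p.2).op φ :=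
      inf_univ_equiv finProdFinEquiv.symm (fun p => P.map (f' p.1 ≫ g p.2).op φ)
    rw [e1, inf_univ_prod]
    refine le_trans (Finset.inf_mono_fun fun j' _ => ?_) hle
    rw [pmap_fininf]
    exact Finset.inf_mono_fun fun j _ => le_of_eq (pmap_comp P _ _ _)
  · rintro X a b hab ⟨n, Z, γ, hγ, m, f, hle⟩
    exact ⟨n, Z, γ, hγ, m, f,
      le_trans (Finset.inf_mono_fun fun j _ => pmap_mono P _ hab) hle⟩
  · rintro X₁ X₂ φ₁ φ₂ ⟨n₁, Z₁, γ₁, hγ₁, m₁, f, hle₁⟩ ⟨n₂, Z₂, γ₂, hγ₂, m₂, g, hle₂⟩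
    set γ : P.obj (op (Z₁ ⨯ Z₂)) :=
      P.map (prod.fst : Z₁ ⨯ Z₂ ⟶ Z₁).op γ₁ ⊔ P.map (prod.snd : Z₁ ⨯ Z₂ ⟶ Z₂).op γ₂ with hγdef
    have hγ : γ ∈ I (Z₁ ⨯ Z₂) := hI.2.2.1 _ _ _ _ hγ₁ hγ₂
    set p₁ : powProd Y (n₁ + n₂) (Z₁ ⨯ Z₂) ⟶ powProd Y n₁ Z₁ :=
      dropOuter Y n₁ n₂ ≫ powMap Y (prod.fst : Z₁ ⨯ Z₂ ⟶ Z₁) n₁ with hp₁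
    set p₂ : powProd Y (n₁ + n₂) (Z₁ ⨯ Z₂) ⟶ powProd Y n₂ Z₂ :=
      dropInner Y n₁ n₂ ≫ powMap Y (prod.snd : Z₁ ⨯ Z₂ ⟶ Z₂) n₂ with hp₂
    have key1 : P.map p₁.op (deltaEl P Y α n₁ Z₁ γ₁) ≤ deltaEl P Y α (n₁ + n₂) (Z₁ ⨯ Z₂) γ := by
      rw [hp₁, pmap_comp, pmap_powMap]
      exact le_trans (pmap_mono P _ (deltaEl_mono P Y α le_sup_left))
        (pmap_dropOuter P Y α n₁ n₂ γ)
    have key2 : P.map p₂.op (deltaEl P Y α n₂ Z₂ γ₂) ≤ deltaEl P Y α (n₁ + n₂) (Z₁ ⨯ Z₂) γ := by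
      rw [hp₂, pmap_comp, pmap_powMap]
      exact le_trans (pmap_mono P _ (deltaEl_mono P Y α le_sup_right))
        (pmap_dropInner P Y α n₁ n₂ γ)
    refine ⟨n₁ + n₂, Z₁ ⨯ Z₂, γ, hγ, m₁ * m₂,
      fun k => prod.lift (p₁ ≫ f (finProdFinEquiv.symm k).1)
        (p₂ ≫ g (finProdFinEquiv.symm k).2), ?_⟩
    set Φ : P.obj (op (X₁ ⨯ X₂)) :=
      P.map (prod.fst : X₁ ⨯ X₂ ⟶ X₁).op φ₁ ⊔ P.map (prod.snd : X₁ ⨯ X₂ ⟶ X₂).op φ₂ with hΦ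
    have e1 : (Finset.univ.inf fun k : Fin (m₁ * m₂) =>
          P.map (prod.lift (p₁ ≫ f (finProdFinEquiv.symm k).1)
            (p₂ ≫ g (finProdFinEquiv.symm k).2)).op Φ) =
        Finset.univ.inf fun p : Fin m₁ × Fin m₂ =>
          P.map (prod.lift (p₁ ≫ f p.1) (p₂ ≫ g p.2)).op Φ :=
      inf_univ_equiv finProdFinEquiv.symm
        (fun p : Fin m₁ × Fin m₂ => P.map (prod.lift (p₁ ≫ f p.1) (p₂ ≫ g p.2)).op Φ)
    have e2 : ∀ p : Fin m₁ × Fin m₂,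
        P.map (prod.lift (p₁ ≫ f p.1) (p₂ ≫ g p.2)).op Φ =
          P.map p₁.op (P.map (f p.1).op φ₁) ⊔ P.map p₂.op (P.map (g p.2).op φ₂) := by
      intro p
      have hf : prod.lift (p₁ ≫ f p.1) (p₂ ≫ g p.2) ≫ (prod.fst : X₁ ⨯ X₂ ⟶ X₁) =
          p₁ ≫ f p.1 := prod.lift_fst _ _
      have hg : prod.lift (p₁ ≫ f p.1) (p₂ ≫ g p.2) ≫ (prod.snd : X₁ ⨯ X₂ ⟶ X₂) =
          p₂ ≫ g p.2 := prod.lift_snd _ _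
      rw [hΦ, pmap_sup, ← pmap_comp, ← pmap_comp, hf, hg, pmap_comp, pmap_comp]
      rw [pmap_comp]
    have e3 : (Finset.univ.inf fun p : Fin m₁ × Fin m₂ =>
          P.map (prod.lift (p₁ ≫ f p.1) (p₂ ≫ g p.2)).op Φ) =
        (Finset.univ.inf fun j => P.map p₁.op (P.map (f j).op φ₁)) ⊔
          (Finset.univ.inf fun j => P.map p₂.op (P.map (g j).op φ₂)) := by
      rw [Finset.inf_congr rfl fun p _ => e2 p]
      exact inf_prod_sup (fun j => P.map p₁.op (P.map (f j).op φ₁))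
        (fun j => P.map p₂.op (P.map (g j).op φ₂))
    rw [e1, e3]
    refine sup_le (le_trans ?_ key1) (le_trans ?_ key2)
    · rw [← pmap_fininf]
      exact pmap_mono P _ hle₁
    · rw [← pmap_fininf]
      exact pmap_mono P _ hle₂
  · exact ⟨0, ⊤_ C, ⊥, hI.2.2.2, 1, fun _ => 𝟙 (⊤_ C),
      (Finset.inf_le (Finset.mem_univ 0)).trans (le_of_eq (pmap_id P ⊥))⟩

lemma idealExt_extract (hF : IsUniversalFilter P F) {X : C} {φ : P.obj (op X)}
    (h1 : φ ∈ idealExt P I Y α X) (h2 : φ ∈ F X) :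
    (∃ X : C, (I X ∩ F X).Nonempty) ∨
      ∃ (Z : C) (γ : P.obj (op Z)), γ ∈ I Z ∧
        P.map (prod.fst : Y ⨯ Z ⟶ Y).op α ⊔ P.map (prod.snd : Y ⨯ Z ⟶ Z).op γ ∈
          F (Y ⨯ Z) := by
  obtain ⟨n, Z, γ, hγ, m, f, hle⟩ := h1
  have hδ : deltaEl P Y α n Z γ ∈ F (powProd Y n Z) := by
    have hinf : (Finset.univ.inf fun j => P.map (f j).op φ) ∈ F (powProd Y n Z) :=
      baFilter_inf (hF.2 _) _ _ fun j _ => hF.1 _ _ (f j) φ h2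
    exact (hF.2 _).2.2 _ _ hinf hle
  cases n with
  | zero => exact Or.inl ⟨Z, γ, hγ, hδ⟩
  | succ k =>
    refine Or.inr ⟨Z, γ, hγ, ?_⟩
    have hre := hF.1 (Y ⨯ Z) (Y ⨯ powProd Y k Z) (diagMap Y k) _ hδ
    rwa [pmap_diagMap P Y α k γ] at hre

end Stmt14Main

theorem stmt14 {C : Type u₁} [Category.{v₁} C] [HasFiniteProducts C]
    (P : Cᵒᵖ ⥤ BoolAlg.{w}) (F I : ∀ X : C, Set (P.obj (op X)))
    (hF : IsUniversalFilter P F) (hI : IsUniversalIdeal P I)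
    (Y : C) (α : P.obj (op Y)) :
    ((∃ X : C,
        (genUnivFilter P
            (fun X' => F X' ∪ familyOfPoints P (fun _ : PUnit => Y) (fun _ => α) X') X ∩
          I X).Nonempty) ↔
      ∃ (X : C) (n : ℕ) (f : Fin n → (X ⟶ Y)) (β : P.obj (op X)),
        β ∈ F X ∧ β ⊓ (Finset.univ.inf fun i => P.map (f i).op α) ∈ I X) ∧
      ((∃ X : C,
        (genUnivIdeal P
            (fun X' => I X' ∪ familyOfPoints P (fun _ : PUnit => Y) (fun _ => α) X') X ∩
          F X).Nonempty) ↔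
      (∃ X : C, (I X ∩ F X).Nonempty) ∨
        ∃ (Z : C) (γ : P.obj (op Z)), γ ∈ I Z ∧
          P.map (prod.fst : Y ⨯ Z ⟶ Y).op α ⊔ P.map (prod.snd : Y ⨯ Z ⟶ Z).op γ ∈
            F (Y ⨯ Z)) := by
  constructor
  · constructor
    · rintro ⟨X, φ, hgen, hφI⟩
      obtain ⟨n, f, β, hβ, hle⟩ :=
        hgen (filtExt P F Y α) (filtExt_isUniversalFilter P F Y α hF)
          (subset_filtExt P F Y α hF)
      exact ⟨X, n, f, β, hβ, hI.2.1 X _ φ hle hφI⟩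
    · rintro ⟨X, n, f, β, hβ, hmem⟩
      refine ⟨X, β ⊓ (Finset.univ.inf fun i => P.map (f i).op α), ?_, hmem⟩
      intro G hG hsub
      have hβG : β ∈ G X := hsub X (Or.inl hβ)
      have hαG : α ∈ G Y := hsub Y (Or.inr (alpha_mem_family P Y α))
      have hinf : (Finset.univ.inf fun i => P.map (f i).op α) ∈ G X :=
        baFilter_inf (hG.2 X) _ _ fun i _ => hG.1 X Y (f i) α hαG
      exact (hG.2 X).2.1 _ _ hβG hinf
  · constructor
    · rintro ⟨X, φ, hgen, hφF⟩
      exact idealExt_extract P F I Y α hF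
        (hgen (idealExt P I Y α) (idealExt_isUniversalIdeal P I Y α hI)
          (subset_idealExt P I Y α hI)) hφF
    · rintro (⟨X, φ, hφI, hφF⟩ | ⟨Z, γ, hγ, hmem⟩)
      · exact ⟨X, φ, fun J hJ hsub => hsub X (Or.inl hφI), hφF⟩
      · refine ⟨Y ⨯ Z, _, ?_, hmem⟩
        intro J hJ hsub
        exact hJ.2.2.1 Y Z α γ (hsub Y (Or.inr (alpha_mem_family P Y α)))
          (hsub Z (Or.inl hγ))

end BooleanDoctrine
end
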